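/- Let F be a finite set of cardinality N ≥ 2 and let P_θ, θ∈F, be probability measures on a measurable space 𝒳 dominated by a σ-finite measure μ, and let P̄ := (1/N) Σ_{θ∈F} P_θ. Then the uniform-prior Bayes testing risk satisfies Fano's inequality: r̄ ≥ 1 − ( log 2 + (1/N) Σ_{θ∈F} D(P_θ||P̄) ) / log N. -/

import Mathlib

open MeasureTheory Real
open scoped ENNReal NNReal

/-- The Kullback-Leibler divergence `D(P‖Q) = ∫ (dP/dQ) log(dP/dQ) dQ` (real-valued;
meaningful when `P ≪ Q` and the integrand is integrable, in which case it agrees with the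
usual definition). -/
noncomputable def klDivR {X : Type*} [MeasurableSpace X] (P Q : Measure X) : ℝ :=
  ∫ x, ((P.rnDeriv Q x).toReal) * Real.log ((P.rnDeriv Q x).toReal) ∂Q

/-- The uniform-prior Bayes testing risk `r̄ = inf_T (1/N) Σ_θ P_θ {T ≠ θ}`, the infimum
being over all measurable tests `T : X → F`. -/
noncomputable def bayesRisk {X F : Type*} [MeasurableSpace X] [Fintype F]
    (P : F → Measure X) : ℝ :=
  ⨅ T : {T : X → F // ∀ θ, MeasurableSet {x | T x = θ}},
    (Fintype.card F : ℝ)⁻¹ * ∑ θ, (P θ {x | T.1 x ≠ θ}).toReal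


private lemma tangent_ineq {x c : ℝ} (hx : 0 ≤ x) (hc : 0 < c) :
    x * Real.log c + (x - c) ≤ x * Real.log x := by
  rcases eq_or_lt_of_le hx with h | h
  · simp [← h]; linarith
  · have h1 : Real.log (c / x) ≤ c / x - 1 := Real.log_le_sub_one_of_pos (div_pos hc h)
    have h2 : Real.log (c / x) = Real.log c - Real.log x := Real.log_div hc.ne' h.ne'
    have h4 : x * (Real.log c - Real.log x) ≤ x * (c / x - 1) :=
      mul_le_mul_of_nonneg_left (h2 ▸ h1) h.le
    have h5 : x * (c / x - 1) = c - x := by field_simp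
    nlinarith

private lemma entropy_ge {u : ℝ} (h0 : 0 ≤ u) (h1 : u ≤ 1) :
    -Real.log 2 ≤ u * Real.log u + (1 - u) * Real.log (1 - u) := by
  have ha := tangent_ineq h0 (by norm_num : (0:ℝ) < 1/2)
  have hb := tangent_ineq (by linarith : (0:ℝ) ≤ 1 - u) (by norm_num : (0:ℝ) < 1/2)
  have hl : Real.log (1/2) = -Real.log 2 := by rw [one_div, Real.log_inv]
  have hc : u * Real.log (1/2) + (1 - u) * Real.log (1/2) = Real.log (1/2) := by ring
  linarith

private lemma abs_mul_log_le {x C : ℝ} (hx : 0 ≤ x) (hxC : x ≤ C) :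
    |x * Real.log x| ≤ 1 + C * |Real.log C| := by
  have hC0 : 0 ≤ C := le_trans hx hxC
  rcases le_or_gt x 1 with hx1 | hx1
  · have h : |x * Real.log x| ≤ 1 := by
      rcases eq_or_lt_of_le hx with h0 | h0
      · simp [← h0]
      · have hlog : Real.log x ≤ 0 := Real.log_nonpos hx hx1
        have hmn : x * Real.log x ≤ 0 := mul_nonpos_iff.mpr (Or.inl ⟨h0.le, hlog⟩)
        rw [abs_of_nonpos hmn]
        have h2 : Real.log x⁻¹ ≤ x⁻¹ - 1 := Real.log_le_sub_one_of_pos (inv_pos.mpr h0)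
        rw [Real.log_inv] at h2
        have h3 : x * (-Real.log x) ≤ x * (x⁻¹ - 1) := mul_le_mul_of_nonneg_left h2 h0.le
        have h4 : x * (x⁻¹ - 1) = 1 - x := by field_simp
        nlinarith
    have : 0 ≤ C * |Real.log C| := mul_nonneg hC0 (abs_nonneg _)
    linarith
  · have hC1 : 1 ≤ C := le_trans hx1.le hxC
    have hlx : 0 ≤ Real.log x := Real.log_nonneg hx1.le
    have hlC : 0 ≤ Real.log C := Real.log_nonneg hC1
    rw [abs_of_nonneg (mul_nonneg hx hlx), abs_of_nonneg hlC]
    have : x * Real.log x ≤ C * Real.log C :=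
      mul_le_mul hxC (Real.log_le_log (by linarith) hxC) hlx hC0
    linarith

private lemma log_sum_ineq {ι : Type*} (s : Finset ι) (a b : ι → ℝ)
    (ha : ∀ i ∈ s, 0 ≤ a i) (hb : ∀ i ∈ s, 0 ≤ b i)
    (hab : ∀ i ∈ s, b i = 0 → a i = 0) (hB : 0 < ∑ i ∈ s, b i) :
    (∑ i ∈ s, a i) * Real.log ((∑ i ∈ s, a i) / (∑ i ∈ s, b i)) ≤
      ∑ i ∈ s, a i * Real.log (a i / b i) := by
  set A := ∑ i ∈ s, a i with hA_def
  set B := ∑ i ∈ s, b i with hB_def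
  have hA0 : 0 ≤ A := Finset.sum_nonneg ha
  rcases eq_or_lt_of_le hA0 with hA | hA
  · have hz : ∀ i ∈ s, a i = 0 := (Finset.sum_eq_zero_iff_of_nonneg ha).mp hA.symm
    have hr : ∑ i ∈ s, a i * Real.log (a i / b i) = 0 :=
      Finset.sum_eq_zero fun i hi => by rw [hz i hi]; ring
    rw [hr, ← hA]; ring_nf; simp
  · have key : ∀ i ∈ s, a i * Real.log (A / B) + (a i - b i * (A / B)) ≤
        a i * Real.log (a i / b i) := by
      intro i hi
      rcases eq_or_lt_of_le (ha i hi) with h0 | h0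
      · have hnn : 0 ≤ b i * (A / B) := mul_nonneg (hb i hi) (div_nonneg hA0 hB.le)
        rw [← h0]; simp; linarith
      · have hbpos : 0 < b i := by
          rcases eq_or_lt_of_le (hb i hi) with hb0 | hb0
          · exact absurd (hab i hi hb0.symm) h0.ne'
          · exact hb0
        have ht := tangent_ineq (div_pos h0 hbpos).le (div_pos hA hB)
        have hm := mul_le_mul_of_nonneg_left ht hbpos.le
        have e2 : b i * (a i / b i * Real.log (A / B) + (a i / b i - A / B)) =
            a i * Real.log (A / B) + (a i - b i * (A / B)) := by
          field_simp
        have e3 : b i * (a i / b i * Real.log (a i / b i)) = a i * Real.log (a i / b i) := by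
          field_simp
        rw [e2, e3] at hm
        exact hm
    have hsum := Finset.sum_le_sum key
    have hsplit : ∑ i ∈ s, (a i * Real.log (A / B) + (a i - b i * (A / B))) =
        A * Real.log (A / B) + (A - B * (A / B)) := by
      rw [Finset.sum_add_distrib, ← Finset.sum_mul, Finset.sum_sub_distrib, ← Finset.sum_mul]
    have hBA : B * (A / B) = A := by field_simp
    rw [hsplit, hBA] at hsum
    linarith

private lemma algebra_step {N S : ℝ} (hN2 : 2 ≤ N) (hS0 : 0 ≤ S) (hSN : S ≤ N) :
    N * Real.log N - N * Real.log 2 - (N - S) * Real.log N ≤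
      S * Real.log S + (N - S) * Real.log ((N - S) / (N - 1)) := by
  have hN0 : 0 < N := by linarith
  have hN1 : 0 < N - 1 := by linarith
  have e1 : S * Real.log S = S * Real.log N + S * Real.log (S / N) := by
    rcases eq_or_lt_of_le hS0 with h | h
    · rw [← h]; try ring
    · rw [Real.log_div h.ne' hN0.ne']; ring
  have e2 : (N - S) * Real.log ((N - S) / (N - 1)) =
      (N - S) * Real.log N + (N - S) * Real.log ((N - S) / N) - (N - S) * Real.log (N - 1) := by
    rcases eq_or_lt_of_le (sub_nonneg.mpr hSN) with h | h
    · rw [← h]; try ring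
    · rw [Real.log_div h.ne' hN1.ne', Real.log_div h.ne' hN0.ne']; ring
  have hu0 : 0 ≤ S / N := div_nonneg hS0 hN0.le
  have hu1 : S / N ≤ 1 := (div_le_one hN0).mpr hSN
  have hent := entropy_ge hu0 hu1
  have e3 : 1 - S / N = (N - S) / N := by field_simp
  rw [e3] at hent
  have hent' := mul_le_mul_of_nonneg_left hent hN0.le
  have e4 : N * (S / N * Real.log (S / N) + (N - S) / N * Real.log ((N - S) / N)) =
      S * Real.log (S / N) + (N - S) * Real.log ((N - S) / N) := by
    field_simp
  rw [e4] at hent'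
  have hlog_mono : Real.log (N - 1) ≤ Real.log N := Real.log_le_log hN1 (by linarith)
  have h5 : (N - S) * Real.log (N - 1) ≤ (N - S) * Real.log N :=
    mul_le_mul_of_nonneg_left hlog_mono (by linarith)
  rw [e1, e2]
  nlinarith [hent', h5]

private lemma setIntegral_mul_log_rnDeriv_ge {X : Type*} [MeasurableSpace X]
    (Pθ Q : Measure X) [IsProbabilityMeasure Pθ] [IsProbabilityMeasure Q]
    (hac : Pθ ≪ Q)
    (hint : Integrable
      (fun x => ((Pθ.rnDeriv Q x).toReal) * Real.log ((Pθ.rnDeriv Q x).toReal)) Q)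
    {A : Set X} (hA : MeasurableSet A) :
    (Pθ A).toReal * Real.log ((Pθ A).toReal / (Q A).toReal) ≤
      ∫ x in A, ((Pθ.rnDeriv Q x).toReal) * Real.log ((Pθ.rnDeriv Q x).toReal) ∂Q := by
  by_cases hq : Q A = 0
  · have hp : Pθ A = 0 := hac hq
    have hres : Q.restrict A = 0 := Measure.restrict_eq_zero.mpr hq
    rw [hres, hp]
    simp
  · by_cases hp : Pθ A = 0
    · have h0 : ∫⁻ x in A, Pθ.rnDeriv Q x ∂Q = 0 := by
        rw [Measure.setLIntegral_rnDeriv hac, hp]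
      have hz : ∀ᵐ x ∂Q, x ∈ A → Pθ.rnDeriv Q x = 0 :=
        (setLIntegral_eq_zero_iff hA (Measure.measurable_rnDeriv _ _)).mp h0
      have hcongr : ∫ x in A, ((Pθ.rnDeriv Q x).toReal) * Real.log ((Pθ.rnDeriv Q x).toReal) ∂Q
          = ∫ x in A, (0:ℝ) ∂Q := by
        refine setIntegral_congr_ae hA ?_
        filter_upwards [hz] with x hx hxA
        rw [hx hxA]
        simp
      rw [hcongr, hp]
      simp
    · have hq' : 0 < (Q A).toReal := ENNReal.toReal_pos hq (measure_ne_top _ _)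
      have hp' : 0 < (Pθ A).toReal := ENNReal.toReal_pos hp (measure_ne_top _ _)
      set f : X → ℝ := fun x => (Pθ.rnDeriv Q x).toReal with hf_def
      set p := (Pθ A).toReal with hp_def
      set q := (Q A).toReal with hq_def
      set c := p / q with hc_def
      have hcpos : 0 < c := div_pos hp' hq'
      have hfint : Integrable f (Q.restrict A) := Measure.integrable_toReal_rnDeriv.restrict
      have hfA : ∫ x in A, f x ∂Q = p := Measure.setIntegral_toReal_rnDeriv hac A
      have hlow1 : Integrable (fun x => f x * Real.log c) (Q.restrict A) := hfint.mul_const _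
      have hlow2 : Integrable (fun x => f x - c) (Q.restrict A) := hfint.sub (integrable_const c)
      have hmono : ∫ x in A, (f x * Real.log c + (f x - c)) ∂Q ≤
          ∫ x in A, f x * Real.log (f x) ∂Q :=
        integral_mono (hlow1.add hlow2) hint.restrict
          (fun x => tangent_ineq ENNReal.toReal_nonneg hcpos)
      have hcomp : ∫ x in A, (f x * Real.log c + (f x - c)) ∂Q = p * Real.log c := by
        rw [integral_add hlow1 hlow2, integral_mul_const, integral_sub hfint (integrable_const c),
          hfA, setIntegral_const, smul_eq_mul]
        have hqc : q * c = p := by rw [hc_def]; field_simp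
        have hqr : Q.real A = q := rfl
        rw [hqr]
        linarith
      calc p * Real.log (p / q) = p * Real.log c := by rw [hc_def]
        _ ≤ ∫ x in A, f x * Real.log (f x) ∂Q := by linarith

/-- Fano's inequality: `r̄ ≥ 1 - (log 2 + (1/N) Σ_θ D(P_θ‖P̄)) / log N`. -/
theorem statement6 {X F : Type*} [MeasurableSpace X] [Fintype F]
    (μ : Measure X) [SigmaFinite μ]
    (P : F → Measure X) (hPdom : ∀ θ, P θ ≪ μ) (hPprob : ∀ θ, IsProbabilityMeasure (P θ))
    (N : ℝ) (hN : N = Fintype.card F) (hN2 : 2 ≤ N)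
    (Pbar : Measure X) (hPbar : Pbar = (Fintype.card F : ℝ≥0∞)⁻¹ • ∑ θ, P θ) :
    1 - (Real.log 2 + N⁻¹ * ∑ θ, klDivR (P θ) Pbar) / Real.log N ≤ bayesRisk P := by
  classical
  have hcard2 : 2 ≤ Fintype.card F := by
    have : (2:ℝ) ≤ (Fintype.card F : ℝ) := hN ▸ hN2
    exact_mod_cast this
  have hcard0 : (Fintype.card F : ℝ≥0∞) ≠ 0 := by
    simp only [ne_eq, Nat.cast_eq_zero]; omega
  have hcardtop : (Fintype.card F : ℝ≥0∞) ≠ ∞ := ENNReal.natCast_ne_top _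
  have hN0 : (0:ℝ) < N := by linarith
  have hFne : Nonempty F := Fintype.card_pos_iff.mp (by omega)
  -- Pbar is a probability measure
  have hPbar_univ : Pbar Set.univ = 1 := by
    rw [hPbar]
    simp only [Measure.smul_apply, Measure.coe_finset_sum, Finset.sum_apply, smul_eq_mul]
    rw [Finset.sum_congr rfl (fun θ _ => measure_univ (μ := P θ))]
    simp only [Finset.sum_const, Finset.card_univ, nsmul_eq_mul, mul_one]
    exact ENNReal.inv_mul_cancel hcard0 hcardtop
  haveI hPbarProb : IsProbabilityMeasure Pbar := ⟨hPbar_univ⟩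
  -- basic measure relations
  have hsum_eq : (Fintype.card F : ℝ≥0∞) • Pbar = ∑ θ, P θ := by
    rw [hPbar, smul_smul, ENNReal.mul_inv_cancel hcard0 hcardtop, one_smul]
  have hle : ∀ θ, P θ ≤ ∑ θ', P θ' := by
    intro θ
    refine Measure.le_iff'.mpr fun s => ?_
    rw [Measure.finset_sum_apply]
    exact Finset.single_le_sum (f := fun i => P i s) (fun i _ => zero_le) (Finset.mem_univ θ)
  have hacPbar : ∀ θ, P θ ≪ Pbar := by
    intro θ
    refine Measure.AbsolutelyContinuous.mk fun s hs h0 => ?_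
    have h1 : (∑ θ', P θ') s = 0 := by
      rw [← hsum_eq]
      simp [Measure.smul_apply, h0]
    have h2 := hle θ s
    rw [h1] at h2
    exact le_antisymm h2 bot_le
  -- a.e. bound on the RN derivative
  have hbd : ∀ θ, ∀ᵐ x ∂Pbar, ((P θ).rnDeriv Pbar x).toReal ≤ N := by
    intro θ
    have h1 : (P θ).rnDeriv (∑ θ', P θ') ≤ᵐ[∑ θ', P θ'] 1 :=
      Measure.rnDeriv_le_one_of_le (hle θ)
    have hPbarAC : Pbar ≪ ∑ θ', P θ' := by
      refine Measure.AbsolutelyContinuous.mk fun s hs h0 => ?_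
      rw [hPbar]
      simp [Measure.smul_apply, h0]
    have h1' : (P θ).rnDeriv (∑ θ', P θ') ≤ᵐ[Pbar] 1 := h1.filter_mono hPbarAC.ae_le
    have h2 : (P θ).rnDeriv ((Fintype.card F : ℝ≥0∞) • Pbar) =ᵐ[Pbar]
        (Fintype.card F : ℝ≥0∞)⁻¹ • (P θ).rnDeriv Pbar :=
      Measure.rnDeriv_smul_right_of_ne_top (P θ) Pbar hcard0 hcardtop
    rw [hsum_eq] at h2
    filter_upwards [h1', h2] with x hx1 hx2
    rw [hx2] at hx1
    simp only [Pi.smul_apply, smul_eq_mul, Pi.one_apply] at hx1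
    have h3 : (P θ).rnDeriv Pbar x ≤ (Fintype.card F : ℝ≥0∞) := by
      calc (P θ).rnDeriv Pbar x
          = (Fintype.card F : ℝ≥0∞) * ((Fintype.card F : ℝ≥0∞)⁻¹ * (P θ).rnDeriv Pbar x) := by
            rw [← mul_assoc, ENNReal.mul_inv_cancel hcard0 hcardtop, one_mul]
        _ ≤ (Fintype.card F : ℝ≥0∞) * 1 := mul_le_mul_right hx1 _
        _ = (Fintype.card F : ℝ≥0∞) := mul_one _
    calc ((P θ).rnDeriv Pbar x).toReal ≤ ((Fintype.card F : ℝ≥0∞)).toReal :=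
          ENNReal.toReal_mono hcardtop h3
      _ = N := by rw [hN]; simp
  -- integrability
  haveI : ∀ θ, IsProbabilityMeasure (P θ) := hPprob
  have hint : ∀ θ, Integrable
      (fun x => (((P θ).rnDeriv Pbar x).toReal) * Real.log (((P θ).rnDeriv Pbar x).toReal))
      Pbar := by
    intro θ
    refine Integrable.mono' (integrable_const (1 + N * |Real.log N|)) ?_ ?_
    · exact ((Measure.measurable_rnDeriv _ _).ennreal_toReal.mul
        (Real.measurable_log.comp (Measure.measurable_rnDeriv _ _).ennreal_toReal)).aestronglyMeasurable
    · filter_upwards [hbd θ] with x hx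
      rw [Real.norm_eq_abs]
      exact abs_mul_log_le ENNReal.toReal_nonneg hx
  -- the infimum
  haveI : Nonempty {T : X → F // ∀ θ, MeasurableSet {x | T x = θ}} := by
    obtain ⟨θ0⟩ := hFne
    refine ⟨⟨fun _ => θ0, fun θ => ?_⟩⟩
    by_cases h : θ0 = θ <;> simp [h]
  rw [bayesRisk]
  refine le_ciInf fun T => ?_
  -- notation for this test
  have hAmeas : ∀ θ, MeasurableSet {x | T.1 x = θ} := T.2
  set A : F → Set X := fun θ => {x | T.1 x = θ} with hA_def
  set p : F → ℝ := fun θ => ((P θ) (A θ)).toReal with hp_def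
  set q : F → ℝ := fun θ => (Pbar (A θ)).toReal with hq_def
  set pc : F → ℝ := fun θ => ((P θ) ((A θ)ᶜ)).toReal with hpc_def
  set qc : F → ℝ := fun θ => (Pbar ((A θ)ᶜ)).toReal with hqc_def
  have hcompl : ∀ θ, {x | T.1 x ≠ θ} = (A θ)ᶜ := fun θ => rfl
  have hgoal_eq : ∑ θ, ((P θ) {x | T.1 x ≠ θ}).toReal = ∑ θ, pc θ := by
    refine Finset.sum_congr rfl fun θ _ => ?_
    rw [hcompl θ]
  -- complement relations
  have hpc : ∀ θ, pc θ = 1 - p θ := by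
    intro θ
    have h := measure_add_measure_compl (μ := P θ) (hAmeas θ)
    rw [measure_univ] at h
    have h' : ((P θ) (A θ)).toReal + ((P θ) ((A θ)ᶜ)).toReal = 1 := by
      rw [← ENNReal.toReal_add (measure_ne_top _ _) (measure_ne_top _ _), h]
      simp
    simp only [hp_def, hpc_def]
    linarith
  have hqc : ∀ θ, qc θ = 1 - q θ := by
    intro θ
    have h := measure_add_measure_compl (μ := Pbar) (hAmeas θ)
    rw [measure_univ] at h
    have h' : (Pbar (A θ)).toReal + (Pbar ((A θ)ᶜ)).toReal = 1 := by
      rw [← ENNReal.toReal_add (measure_ne_top _ _) (measure_ne_top _ _), h]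
      simp
    simp only [hq_def, hqc_def]
    linarith
  -- the q's sum to one
  have hq1 : ∑ θ, q θ = 1 := by
    have hpre : ∀ θ : F, A θ = T.1 ⁻¹' {θ} := fun θ => rfl
    have hsum : ∑ θ, Pbar (A θ) = Pbar Set.univ := by
      rw [Finset.sum_congr rfl fun θ _ => by rw [hpre θ]]
      rw [sum_measure_preimage_singleton Finset.univ (fun θ _ => hAmeas θ)]
      simp
    have := congrArg ENNReal.toReal hsum
    rw [ENNReal.toReal_sum (fun θ _ => measure_ne_top _ _)] at this
    rw [hPbar_univ] at this
    simpa using this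
  have hqc1 : ∑ θ, qc θ = N - 1 := by
    rw [Finset.sum_congr rfl fun θ _ => hqc θ, Finset.sum_sub_distrib, hq1]
    simp [hN]
  -- nonnegativity etc.
  have hp0 : ∀ θ, 0 ≤ p θ := fun θ => ENNReal.toReal_nonneg
  have hq0 : ∀ θ, 0 ≤ q θ := fun θ => ENNReal.toReal_nonneg
  have hpc0 : ∀ θ, 0 ≤ pc θ := fun θ => ENNReal.toReal_nonneg
  have hqc0 : ∀ θ, 0 ≤ qc θ := fun θ => ENNReal.toReal_nonneg
  have hp1 : ∀ θ, p θ ≤ 1 := fun θ => by have := hpc θ; have := hpc0 θ; linarith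
  set S := ∑ θ, p θ with hS_def
  have hS0 : 0 ≤ S := Finset.sum_nonneg fun θ _ => hp0 θ
  have hSN : S ≤ N := by
    have : S ≤ ∑ _θ : F, (1:ℝ) := Finset.sum_le_sum fun θ _ => hp1 θ
    simpa [hN] using this
  have hSpc : ∑ θ, pc θ = N - S := by
    rw [Finset.sum_congr rfl fun θ _ => hpc θ, Finset.sum_sub_distrib, ← hS_def]
    simp [hN]
  -- step 1 : pointwise data processing
  have step1 : ∀ θ, p θ * Real.log (p θ / q θ) + pc θ * Real.log (pc θ / qc θ) ≤
      klDivR (P θ) Pbar := by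
    intro θ
    have h1 := setIntegral_mul_log_rnDeriv_ge (P θ) Pbar (hacPbar θ) (hint θ) (hAmeas θ)
    have h2 := setIntegral_mul_log_rnDeriv_ge (P θ) Pbar (hacPbar θ) (hint θ) (hAmeas θ).compl
    have hsplit : klDivR (P θ) Pbar =
        (∫ x in A θ, (((P θ).rnDeriv Pbar x).toReal) * Real.log (((P θ).rnDeriv Pbar x).toReal) ∂Pbar)
        + ∫ x in (A θ)ᶜ, (((P θ).rnDeriv Pbar x).toReal) * Real.log (((P θ).rnDeriv Pbar x).toReal) ∂Pbar :=
      (integral_add_compl (hAmeas θ) (hint θ)).symm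
    rw [hsplit]
    exact add_le_add h1 h2
  -- step 2 : log-sum
  have hab1 : ∀ θ ∈ Finset.univ, q θ = 0 → p θ = 0 := by
    intro θ _ h
    have hq' : Pbar (A θ) = 0 := by
      have := ENNReal.toReal_eq_zero_iff (Pbar (A θ))
      rcases this.mp h with h' | h'
      · exact h'
      · exact absurd h' (measure_ne_top _ _)
    have : (P θ) (A θ) = 0 := hacPbar θ hq'
    simp [hp_def, this]
  have hab2 : ∀ θ ∈ Finset.univ, qc θ = 0 → pc θ = 0 := by
    intro θ _ h
    have hq' : Pbar ((A θ)ᶜ) = 0 := by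
      have := ENNReal.toReal_eq_zero_iff (Pbar ((A θ)ᶜ))
      rcases this.mp h with h' | h'
      · exact h'
      · exact absurd h' (measure_ne_top _ _)
    have : (P θ) ((A θ)ᶜ) = 0 := hacPbar θ hq'
    simp [hpc_def, this]
  have step2a : S * Real.log S ≤ ∑ θ, p θ * Real.log (p θ / q θ) := by
    have h := log_sum_ineq Finset.univ p q (fun θ _ => hp0 θ) (fun θ _ => hq0 θ) hab1
      (by rw [hq1]; norm_num)
    rw [hq1, div_one] at h
    exact h
  have step2b : (N - S) * Real.log ((N - S) / (N - 1)) ≤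
      ∑ θ, pc θ * Real.log (pc θ / qc θ) := by
    have h := log_sum_ineq Finset.univ pc qc (fun θ _ => hpc0 θ) (fun θ _ => hqc0 θ) hab2
      (by rw [hqc1]; linarith)
    rw [hSpc, hqc1] at h
    exact h
  -- step 3 : assemble
  have hKL : N * Real.log N - N * Real.log 2 - (N - S) * Real.log N ≤
      ∑ θ, klDivR (P θ) Pbar := by
    have h1 := algebra_step hN2 hS0 hSN
    have h2 : ∑ θ, (p θ * Real.log (p θ / q θ) + pc θ * Real.log (pc θ / qc θ)) ≤
        ∑ θ, klDivR (P θ) Pbar := Finset.sum_le_sum fun θ _ => step1 θ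
    rw [Finset.sum_add_distrib] at h2
    linarith
  -- final algebra
  have hlogN : 0 < Real.log N := Real.log_pos (by linarith)
  have hrisk : (Fintype.card F : ℝ)⁻¹ * ∑ θ, ((P θ) {x | T.1 x ≠ θ}).toReal
      = N⁻¹ * (N - S) := by
    rw [hgoal_eq, hSpc, hN]
  rw [hrisk]
  have h4 := mul_le_mul_of_nonneg_left hKL (inv_nonneg.mpr hN0.le)
  have e : N⁻¹ * (N * Real.log N - N * Real.log 2 - (N - S) * Real.log N)
      = Real.log N - Real.log 2 - N⁻¹ * (N - S) * Real.log N := by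
    field_simp
  rw [e] at h4
  have h5 : (1 - N⁻¹ * (N - S)) * Real.log N ≤
      Real.log 2 + N⁻¹ * ∑ θ, klDivR (P θ) Pbar := by
    have : (1 - N⁻¹ * (N - S)) * Real.log N
        = Real.log N - N⁻¹ * (N - S) * Real.log N := by ring
    linarith
  have h6 : 1 - N⁻¹ * (N - S) ≤
      (Real.log 2 + N⁻¹ * ∑ θ, klDivR (P θ) Pbar) / Real.log N :=
    (le_div_iff₀ hlogN).mpr h5
  linarith
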